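/- Let q be a positive integer that is not a perfect square, and let h be a q-Weil polynomial of degree 4 with a real root and with coefficient a = 0 of x^3 (equivalently, with sum of roots 0); then h(x) = x^4 − 2q x^2 + q^2 = (x^2 − q)^2. More generally, every q-Weil polynomial of degree 4 with a real root is either (x^2 − q)^2, or (when q is a perfect square) of the form (x ± √q)^2 h_0(x) with h_0 a q-Weil polynomial of degree 2. -/

import Mathlib

open Polynomial

/-- `h` is a `q`-Weil polynomial of degree `2*g`: its complex roots consist of
`g` conjugate pairs, each of complex absolute value `√q`. -/
def IsWeil (q g : ℕ) (h : Polynomial ℤ) : Prop :=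
  ∃ w : Fin g → ℂ,
    (∀ i, ‖w i‖ = Real.sqrt q) ∧
    h.map (Int.castRingHom ℂ) =
      ∏ i, ((Polynomial.X - Polynomial.C (w i)) *
            (Polynomial.X - Polynomial.C ((starRingEnd ℂ) (w i))))

private lemma coeffs_of_quartic (h : Polynomial ℤ) (a b c d : ℂ)
    (hmap : h.map (Int.castRingHom ℂ) = (X - C a) * (X - C b) * ((X - C c) * (X - C d))) :
    ((h.coeff 3 : ℤ) : ℂ) = -(a + b + c + d) ∧
      ((h.coeff 2 : ℤ) : ℂ) = a*b + a*c + a*d + b*c + b*d + c*d := by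
  have hexp : h.map (Int.castRingHom ℂ) =
      X^4 - C (a + b + c + d) * X^3 + C (a*b + a*c + a*d + b*c + b*d + c*d) * X^2
        - C (a*b*c + a*b*d + a*c*d + b*c*d) * X + C (a*b*c*d) := by
    rw [hmap]; simp only [C_add, C_mul]; ring
  constructor
  · have := congrArg (fun p => Polynomial.coeff p 3) hexp
    simpa [coeff_X_pow, coeff_C, coeff_C_mul, add_mul, mul_assoc] using this
  · have := congrArg (fun p => Polynomial.coeff p 2) hexp
    simpa [coeff_X_pow, coeff_C, coeff_C_mul, add_mul, mul_assoc] using this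

private lemma map_inj : Function.Injective (Polynomial.map (Int.castRingHom ℂ)) :=
  Polynomial.map_injective _ Int.cast_injective

private lemma core (q : ℕ) (hq : 0 < q) (h : Polynomial ℤ) (w0 w1 : ℂ)
    (ha1 : ‖w1‖ = Real.sqrt q)
    (hmap : h.map (Int.castRingHom ℂ) =
      (X - C w0) * (X - C ((starRingEnd ℂ) w0)) * ((X - C w1) * (X - C ((starRingEnd ℂ) w1))))
    (x : ℝ) (hx : w0 = (x : ℂ)) (hx2 : x ^ 2 = q) :
    (¬ IsSquare q → h.coeff 3 = 0 → h = (X ^ 2 - C (q : ℤ)) ^ 2) ∧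
    (h = (X ^ 2 - C (q : ℤ)) ^ 2 ∨
      ∃ s : ℕ, s ^ 2 = q ∧ ∃ h0 : Polynomial ℤ, IsWeil q 1 h0 ∧
        (h = (X + C (s : ℤ)) ^ 2 * h0 ∨ h = (X - C (s : ℤ)) ^ 2 * h0)) := by
  have hconj0 : (starRingEnd ℂ) w0 = w0 := by rw [hx]; exact Complex.conj_ofReal x
  rw [hconj0] at hmap
  have hnsq1 : Complex.normSq w1 = q := by
    have := Complex.sq_norm w1
    rw [ha1, Real.sq_sqrt (Nat.cast_nonneg q)] at this
    exact this.symm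
  have hw1q : w1 * (starRingEnd ℂ) w1 = (q : ℂ) := by
    rw [Complex.mul_conj, hnsq1]; norm_num
  obtain ⟨E3, E2⟩ := coeffs_of_quartic h w0 w0 w1 ((starRingEnd ℂ) w1) hmap
  set c3 : ℤ := h.coeff 3 with hc3
  set c2 : ℤ := h.coeff 2 with hc2
  set u : ℝ := w1.re with hu
  have hsum : w1 + (starRingEnd ℂ) w1 = ((2 * u : ℝ) : ℂ) := Complex.add_conj w1
  have hsum2 : w1 + (starRingEnd ℂ) w1 = 2 * (u : ℂ) := by push_cast at hsum ⊢; exact hsum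
  rw [hx] at E3 E2
  -- real versions of the coefficient identities
  have hrE3 : (c3 : ℝ) = -(x + x + 2 * u) := by
    have h3 : ((c3 : ℝ) : ℂ) = ((-(x + x + 2*u) : ℝ) : ℂ) := by
      push_cast
      linear_combination E3 - hsum2
    exact_mod_cast h3
  have hrE2 : (c2 : ℝ) = x^2 + (x + x) * (2*u) + q := by
    have h2 : ((c2 : ℝ) : ℂ) = ((x^2 + (x + x) * (2*u) + q : ℝ) : ℂ) := by
      push_cast
      linear_combination E2 + (2*(x:ℂ)) * hsum2 + hw1q
    exact_mod_cast h2
  have hx2' : x ^ 2 = (q : ℝ) := hx2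
  have master : 2 * x * (c3 : ℝ) = -(c2 : ℝ) - 2 * q := by
    linear_combination (2*x) * hrE3 + hrE2 - 3 * hx2'
  -- the non-square case
  have keyns : ¬ IsSquare q → h = (X ^ 2 - C (q : ℤ)) ^ 2 := by
    intro hns
    have hirr : Irrational x := by
      have hirrs : Irrational (Real.sqrt q) := irrational_sqrt_natCast_iff.2 hns
      have hxx : x = Real.sqrt q ∨ x = -Real.sqrt q := by
        have h2 : x ^ 2 = (Real.sqrt q) ^ 2 := by
          rw [Real.sq_sqrt (Nat.cast_nonneg q)]; exact hx2
        exact sq_eq_sq_iff_eq_or_eq_neg.mp h2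
      rcases hxx with h' | h'
      · rw [h']; exact hirrs
      · rw [h']; exact hirrs.neg
    have hc30 : c3 = 0 := by
      by_contra hne
      have h2c3 : (2 * c3 : ℤ) ≠ 0 := by simpa using hne
      have hi : Irrational (x * ((2 * c3 : ℤ) : ℝ)) := hirr.mul_intCast h2c3
      have heq : x * ((2 * c3 : ℤ) : ℝ) = (((-c2 - 2 * q : ℤ)) : ℝ) := by
        push_cast
        linear_combination master
      rw [heq] at hi
      exact (Int.not_irrational _) hi
    have hu' : u = -x := by
      rw [hc30] at hrE3
      push_cast at hrE3
      linarith
    have him : w1.im = 0 := by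
      have hns' : u * u + w1.im * w1.im = q := by
        have := hnsq1
        rwa [Complex.normSq_apply] at this
      have huu : u * u = (q : ℝ) := by rw [hu']; linear_combination hx2'
      have : w1.im * w1.im = 0 := by linarith
      exact mul_self_eq_zero.mp this
    have hw1 : w1 = ((-x : ℝ) : ℂ) := by
      apply Complex.ext
      · simpa using hu'
      · simpa using him
    have hconj1 : (starRingEnd ℂ) w1 = w1 := by rw [hw1]; exact Complex.conj_ofReal _
    have hqC : ((q : ℕ) : ℂ) = ((x : ℝ) : ℂ) ^ 2 := by
      have := congrArg (fun r : ℝ => (r : ℂ)) hx2'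
      push_cast at this ⊢
      exact this.symm
    apply map_inj
    rw [hmap, hconj1, hw1, hx]
    simp only [Polynomial.map_pow, Polynomial.map_sub, Polynomial.map_X, Polynomial.map_C,
      Polynomial.map_natCast, Polynomial.map_intCast, eq_intCast]
    push_cast
    rw [← Polynomial.C_eq_natCast, hqC]
    simp only [map_neg, map_pow]
    ring
  refine ⟨fun hns _ => keyns hns, ?_⟩
  by_cases hsq : IsSquare q
  · right
    obtain ⟨s, hs⟩ := hsq
    refine ⟨s, by rw [sq]; exact hs.symm, ?_⟩
    have hxs : x = (s : ℝ) ∨ x = -(s : ℝ) := by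
      have h2 : x ^ 2 = ((s : ℝ)) ^ 2 := by
        rw [hx2', hs]; push_cast; ring
      exact sq_eq_sq_iff_eq_or_eq_neg.mp h2
    have hBC : (C w1 * C ((starRingEnd ℂ) w1) : Polynomial ℂ) = ((q : ℕ) : Polynomial ℂ) := by
      rw [← C_mul, hw1q, Polynomial.C_eq_natCast]
    rcases hxs with hxs | hxs
    · set n : ℤ := -c3 - 2 * s with hn
      have hsumn : w1 + (starRingEnd ℂ) w1 = ((n : ℤ) : ℂ) := by
        rw [hsum2]
        rw [hxs] at hrE3
        have h2u : 2 * u = ((n : ℤ) : ℝ) := by push_cast [hn]; push_cast at hrE3; linarith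
        exact_mod_cast congrArg (fun r : ℝ => (r : ℂ)) h2u
      have hAC : (C w1 + C ((starRingEnd ℂ) w1) : Polynomial ℂ) = ((n : ℤ) : Polynomial ℂ) := by
        rw [← C_add, hsumn]
        norm_cast
      have hmap0 : (X ^ 2 - C n * X + C (q : ℤ)).map (Int.castRingHom ℂ) =
          (X - C w1) * (X - C ((starRingEnd ℂ) w1)) := by
        simp only [Polynomial.map_add, Polynomial.map_sub, Polynomial.map_pow,
          Polynomial.map_mul, Polynomial.map_X, Polynomial.map_C,
          Polynomial.map_natCast, Polynomial.map_intCast, eq_intCast]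
        push_cast
        linear_combination (X : Polynomial ℂ) * hAC - hBC
      refine ⟨X ^ 2 - C n * X + C (q : ℤ), ⟨fun _ => w1, fun _ => ha1, ?_⟩, Or.inr ?_⟩
      · rw [Fin.prod_univ_one, hmap0]
      · apply map_inj
        rw [Polynomial.map_mul, hmap, hmap0, Polynomial.map_pow, Polynomial.map_sub,
          Polynomial.map_X, Polynomial.map_C, hx, hxs]
        simp only [eq_intCast]
        push_cast
        ring
    · set n : ℤ := -c3 + 2 * s with hn
      have hsumn : w1 + (starRingEnd ℂ) w1 = ((n : ℤ) : ℂ) := by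
        rw [hsum2]
        rw [hxs] at hrE3
        have h2u : 2 * u = ((n : ℤ) : ℝ) := by push_cast [hn]; push_cast at hrE3; linarith
        exact_mod_cast congrArg (fun r : ℝ => (r : ℂ)) h2u
      have hAC : (C w1 + C ((starRingEnd ℂ) w1) : Polynomial ℂ) = ((n : ℤ) : Polynomial ℂ) := by
        rw [← C_add, hsumn]
        norm_cast
      have hmap0 : (X ^ 2 - C n * X + C (q : ℤ)).map (Int.castRingHom ℂ) =
          (X - C w1) * (X - C ((starRingEnd ℂ) w1)) := by
        simp only [Polynomial.map_add, Polynomial.map_sub, Polynomial.map_pow,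
          Polynomial.map_mul, Polynomial.map_X, Polynomial.map_C,
          Polynomial.map_natCast, Polynomial.map_intCast, eq_intCast]
        push_cast
        linear_combination (X : Polynomial ℂ) * hAC - hBC
      refine ⟨X ^ 2 - C n * X + C (q : ℤ), ⟨fun _ => w1, fun _ => ha1, ?_⟩, Or.inl ?_⟩
      · rw [Fin.prod_univ_one, hmap0]
      · apply map_inj
        rw [Polynomial.map_mul, hmap, hmap0, Polynomial.map_pow, Polynomial.map_add,
          Polynomial.map_X, Polynomial.map_C, hx, hxs]
        simp only [eq_intCast]
        push_cast
        simp only [map_neg]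
        ring
  · exact Or.inl (keyns hsq)

theorem stmt17 (q : ℕ) (hq : 0 < q) (h : Polynomial ℤ) (hW : IsWeil q 2 h)
    (hrr : ∃ x : ℝ, Polynomial.aeval x h = 0) :
    (¬ IsSquare q → h.coeff 3 = 0 → h = (X ^ 2 - C (q : ℤ)) ^ 2) ∧
    (h = (X ^ 2 - C (q : ℤ)) ^ 2 ∨
      ∃ s : ℕ, s ^ 2 = q ∧ ∃ h0 : Polynomial ℤ, IsWeil q 1 h0 ∧
        (h = (X + C (s : ℤ)) ^ 2 * h0 ∨ h = (X - C (s : ℤ)) ^ 2 * h0)) := by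
  obtain ⟨w, habs, hmap⟩ := hW
  rw [Fin.prod_univ_two] at hmap
  obtain ⟨x, hx⟩ := hrr
  have hxC : Polynomial.eval ((x : ℂ)) (h.map (Int.castRingHom ℂ)) = 0 := by
    have h1 : Polynomial.aeval ((x : ℂ)) h = 0 := by
      have := Polynomial.aeval_algebraMap_apply ℂ x h
      rw [hx] at this
      simpa using this
    rw [Polynomial.eval_map]
    simpa [Polynomial.aeval_def] using h1
  rw [hmap] at hxC
  have hroot : ∃ i : Fin 2, w i = (x : ℂ) := by
    have hconj : ∀ z : ℂ, (starRingEnd ℂ) z = (x : ℂ) → z = (x : ℂ) := by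
      intro z hz
      have := congrArg (starRingEnd ℂ) hz
      rwa [Complex.conj_conj, Complex.conj_ofReal] at this
    simp only [Polynomial.eval_mul, Polynomial.eval_sub, Polynomial.eval_X,
      Polynomial.eval_C, mul_eq_zero, sub_eq_zero] at hxC
    rcases hxC with (h' | h') | (h' | h')
    · exact ⟨0, h'.symm⟩
    · exact ⟨0, hconj _ h'.symm⟩
    · exact ⟨1, h'.symm⟩
    · exact ⟨1, hconj _ h'.symm⟩
  obtain ⟨i, hi⟩ := hroot
  have hx2 : x ^ 2 = (q : ℝ) := by
    have h1 := habs i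
    rw [hi, Complex.norm_real, Real.norm_eq_abs] at h1
    have h2 := congrArg (· ^ 2) h1
    simpa [sq_abs, Real.sq_sqrt (Nat.cast_nonneg q)] using h2
  fin_cases i
  · exact core q hq h (w 0) (w 1) (habs 1) hmap x hi hx2
  · refine core q hq h (w 1) (w 0) (habs 0) ?_ x hi hx2
    rw [hmap]; ring
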